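/- arXiv:1607.05118 — 2 statements merged into one kernel-verified Lean document; each statement's English description precedes it below -/
import Mathlib

section
/- Let ω be a real number with 0 < ω < 1 and let λ = √(1 - ω²) (or λ = -√(1 - ω²)). Define ψ(θ, τ) = e^{-λτ}/(1 - λ·cos θ) for θ ∈ [-π, π] and τ ∈ ℝ. Then for all such θ and τ, cos θ · ∂ψ/∂τ (θ, τ) + ψ(θ, τ) = (ω/(2π)) ∫_{-π}^{π} ψ(θ', τ) dθ'. -/
open Real MeasureTheory

/-- Free modes of the two-dimensional transport equation (Eq. (34)): for
single-scattering albedo `0 < ω < 1` and `λ = ±√(1-ω²)`, the flux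
`ψ(θ,τ) = e^{-λτ}/(1 - λ cos θ)` satisfies the source-free Boltzmann equation
`cos θ · ∂ψ/∂τ + ψ = (ω/(2π)) ∫_{-π}^{π} ψ(θ',τ) dθ'`. -/
theorem free_mode_solves_transport (ω : ℝ) (hω0 : 0 < ω) (hω1 : ω < 1) (l : ℝ)
    (hl : l = Real.sqrt (1 - ω ^ 2) ∨ l = -Real.sqrt (1 - ω ^ 2)) :
    ∀ θ ∈ Set.Icc (-π) π, ∀ τ : ℝ,
      Real.cos θ * deriv (fun t : ℝ => Real.exp (-l * t) / (1 - l * Real.cos θ)) τ +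
          Real.exp (-l * τ) / (1 - l * Real.cos θ) =
        (ω / (2 * π)) * ∫ θ' in (-π)..π, Real.exp (-l * τ) / (1 - l * Real.cos θ') := by
  have hω2 : (0:ℝ) ≤ 1 - ω ^ 2 := by nlinarith
  have hl2 : l ^ 2 = 1 - ω ^ 2 := by
    rcases hl with h | h <;> rw [h] <;>
      simp [neg_pow, Real.sq_sqrt hω2]
  have hlabs : |l| < 1 := by
    rw [← Real.sqrt_one]
    rw [show |l| = Real.sqrt (l ^ 2) by rw [Real.sqrt_sq_eq_abs]]
    apply Real.sqrt_lt_sqrt (by positivity)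
    nlinarith
  -- positivity of 1 - l cos x for all x
  have hpos : ∀ x : ℝ, 0 < 1 - l * Real.cos x := by
    intro x
    have h1 : l * Real.cos x ≤ |l * Real.cos x| := le_abs_self _
    have h2 : |l * Real.cos x| ≤ |l| := by
      rw [abs_mul]
      calc |l| * |Real.cos x| ≤ |l| * 1 := by
            exact mul_le_mul_of_nonneg_left (Real.abs_cos_le_one x) (abs_nonneg l)
        _ = |l| := mul_one _
    linarith
  have hDpos : ∀ x : ℝ, 0 < 1 + ω - l * Real.cos x := by
    intro x; have := hpos x; linarith
  -- antiderivative of (1 - l cos x)⁻¹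
  set G : ℝ → ℝ := fun x => ω⁻¹ * (x + 2 * Real.arctan (l * Real.sin x / (1 + ω - l * Real.cos x)))
    with hG
  have key : ∀ x : ℝ, HasDerivAt G ((1 - l * Real.cos x)⁻¹) x := by
    intro x
    set D : ℝ := 1 + ω - l * Real.cos x with hD
    have hDne : D ≠ 0 := ne_of_gt (hDpos x)
    have h1 : HasDerivAt (fun x : ℝ => l * Real.sin x) (l * Real.cos x) x :=
      (Real.hasDerivAt_sin x).const_mul l
    have h2 : HasDerivAt (fun x : ℝ => 1 + ω - l * Real.cos x) (l * Real.sin x) x := by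
      have := ((Real.hasDerivAt_cos x).const_mul l).const_sub (1 + ω)
      exact this.congr_deriv (by ring)
    have hu : HasDerivAt (fun x : ℝ => l * Real.sin x / (1 + ω - l * Real.cos x))
        ((l * Real.cos x * D - l * Real.sin x * (l * Real.sin x)) / D ^ 2) x :=
      h1.div h2 hDne
    have harc : HasDerivAt (fun x : ℝ => Real.arctan (l * Real.sin x / (1 + ω - l * Real.cos x)))
        ((1 + (l * Real.sin x / D) ^ 2)⁻¹ *
          ((l * Real.cos x * D - l * Real.sin x * (l * Real.sin x)) / D ^ 2)) x := by
      have := (Real.hasDerivAt_arctan (l * Real.sin x / D)).comp x hu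
      exact this.congr_deriv (by rw [one_div])
    have hsum : HasDerivAt G
        (ω⁻¹ * (1 + 2 * ((1 + (l * Real.sin x / D) ^ 2)⁻¹ *
          ((l * Real.cos x * D - l * Real.sin x * (l * Real.sin x)) / D ^ 2)))) x :=
      ((hasDerivAt_id x).add (harc.const_mul 2)).const_mul ω⁻¹
    convert hsum using 1
    have hne : (1 : ℝ) - l * Real.cos x ≠ 0 := ne_of_gt (hpos x)
    have hsc := Real.sin_sq_add_cos_sq x
    have hA : 1 + (l * Real.sin x / D) ^ 2 = (2 * (1 + ω) * (1 - l * Real.cos x)) / D ^ 2 := by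
      field_simp
      linear_combination l ^ 2 * hsc + hl2
    have h1ω : (1:ℝ) + ω ≠ 0 := by positivity
    have hnum : l * Real.cos x * D - l * Real.sin x * (l * Real.sin x)
        = (1 + ω) * (l * Real.cos x - 1 + ω) := by
      rw [hD]
      linear_combination (-l ^ 2) * hsc - hl2
    have e2 : (1 + (l * Real.sin x / D) ^ 2)⁻¹ *
        ((l * Real.cos x * D - l * Real.sin x * (l * Real.sin x)) / D ^ 2)
        = (l * Real.cos x - 1 + ω) / (2 * (1 - l * Real.cos x)) := by
      rw [hA, hnum]
      field_simp
    rw [e2]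
    field_simp
    ring
  have hcont : Continuous fun x : ℝ => (1 - l * Real.cos x)⁻¹ := by
    apply Continuous.inv₀
    · continuity
    · intro x; exact ne_of_gt (hpos x)
  have hint : ∫ x in (-π)..π, (1 - l * Real.cos x)⁻¹ = 2 * π / ω := by
    have := intervalIntegral.integral_eq_sub_of_hasDerivAt
      (f := G) (f' := fun x => (1 - l * Real.cos x)⁻¹)
      (a := -π) (b := π) (fun x _ => key x)
      (hcont.intervalIntegrable _ _)
    rw [this, hG]
    simp [Real.sin_pi, Real.arctan_zero]
    field_simp
    ring
  intro θ hθ τ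
  have hC : (1 : ℝ) - l * Real.cos θ ≠ 0 := ne_of_gt (hpos θ)
  have h1 : HasDerivAt (fun t : ℝ => -l * t) (-l) τ := by
    simpa using (hasDerivAt_id τ).const_mul (-l)
  have h2 : HasDerivAt (fun t : ℝ => Real.exp (-l * t)) (Real.exp (-l * τ) * (-l)) τ := h1.exp
  have hd : deriv (fun t : ℝ => Real.exp (-l * t) / (1 - l * Real.cos θ)) τ
      = Real.exp (-l * τ) * (-l) / (1 - l * Real.cos θ) :=
    (h2.div_const (1 - l * Real.cos θ)).deriv
  rw [hd]
  have hI : ∫ θ' in (-π)..π, Real.exp (-l * τ) / (1 - l * Real.cos θ')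
      = Real.exp (-l * τ) * (2 * π / ω) := by
    simp only [div_eq_mul_inv]
    rw [intervalIntegral.integral_const_mul, hint]
    ring
  rw [hI]
  have hπ : (π : ℝ) ≠ 0 := Real.pi_ne_zero
  have hωne : ω ≠ 0 := ne_of_gt hω0
  field_simp
  ring_nf
  have hC' : 1 - cos θ * l ≠ 0 := by rw [mul_comm]; exact hC
  field_simp
  ring
end

section
/- Let ω be a real number with 0 < ω < 1 and let s be a real number with s > -1. Then the function ϑ ↦ ϑ · cot ϑ · csc²ϑ / [ (s + √(1 + ω²·cot²ϑ)) · √(1 + ω²·cot²ϑ) ] is integrable on the interval (0, π/2). -/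
open Real MeasureTheory

/-- Integrability of the Wiener-Hopf factor exponent integrand (second line of
Eq. (32)): for `0 < ω < 1` and `s > -1`, the function
`ϑ ↦ ϑ cot ϑ csc²ϑ / ((s+√(1+ω²cot²ϑ))√(1+ω²cot²ϑ))` is integrable on
`(0, π/2)`. -/
theorem wiener_hopf_integrand_integrable (ω : ℝ) (hω0 : 0 < ω) (hω1 : ω < 1)
    (s : ℝ) (hs : -1 < s) :
    IntegrableOn (fun x : ℝ =>
        x * (Real.cos x / Real.sin x) * (1 / Real.sin x ^ 2) /
          ((s + Real.sqrt (1 + ω ^ 2 * (Real.cos x / Real.sin x) ^ 2)) *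
            Real.sqrt (1 + ω ^ 2 * (Real.cos x / Real.sin x) ^ 2)))
      (Set.Ioo 0 (π / 2)) := by
  have hc : (0:ℝ) < min 1 (1 + s) := lt_min one_pos (by linarith)
  apply MeasureTheory.Measure.integrableOn_of_bounded
    (M := 1 / (min 1 (1 + s) * ω ^ 2)) measure_Ioo_lt_top.ne
  case f_mble =>
    apply Measurable.aestronglyMeasurable
    fun_prop
  · rw [ae_restrict_iff' measurableSet_Ioo]
    filter_upwards with x hx
    obtain ⟨hx0, hx2⟩ := hx
    have hpi := Real.pi_pos
    have hsin : 0 < Real.sin x := Real.sin_pos_of_pos_of_lt_pi hx0 (by linarith)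
    have hcos : 0 < Real.cos x := Real.cos_pos_of_mem_Ioo ⟨by linarith, hx2⟩
    set t : ℝ := Real.cos x / Real.sin x with ht
    have ht0 : 0 ≤ t := by positivity
    set q : ℝ := Real.sqrt (1 + ω ^ 2 * t ^ 2) with hqdef
    have hq1 : 1 ≤ q := by
      rw [hqdef]
      have h := Real.sqrt_le_sqrt (show (1:ℝ) ≤ 1 + ω ^ 2 * t ^ 2 by nlinarith)
      rwa [Real.sqrt_one] at h
    have hqsq : q * q = 1 + ω ^ 2 * t ^ 2 := Real.mul_self_sqrt (by positivity)
    have hcsc : 1 / Real.sin x ^ 2 = 1 + t ^ 2 := by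
      have hpyth := Real.sin_sq_add_cos_sq x
      rw [ht]
      field_simp
      linarith
    have hxt : x * t ≤ 1 := by
      have h1 : x < Real.tan x := Real.lt_tan hx0 hx2
      rw [Real.tan_eq_sin_div_cos] at h1
      rw [ht, ← mul_div_assoc, div_le_one hsin]
      nlinarith [(lt_div_iff₀ hcos).mp h1]
    have hω2 : ω ^ 2 ≤ 1 := by nlinarith
    have h1 : ω ^ 2 * (1 + t ^ 2) ≤ 1 + ω ^ 2 * t ^ 2 := by nlinarith
    have hD : min 1 (1 + s) * (ω ^ 2 * (1 + t ^ 2)) ≤ (s + q) * q := by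
      rcases le_or_gt s 0 with h | h
      · have hsq : s * q ≤ s := by nlinarith
        have hmin : min 1 (1 + s) ≤ 1 + s := min_le_right _ _
        nlinarith
      · have hmin : min 1 (1 + s) ≤ 1 := min_le_left _ _
        nlinarith
    have hDpos : 0 < (s + q) * q := by nlinarith
    have hbound : x * t * (1 + t ^ 2) ≤ 1 * (1 + t ^ 2) :=
      mul_le_mul_of_nonneg_right hxt (by positivity)
    rw [hcsc, Real.norm_eq_abs, abs_of_nonneg (by positivity)]
    calc x * t * (1 + t ^ 2) / ((s + q) * q)
        ≤ 1 * (1 + t ^ 2) / (min 1 (1 + s) * (ω ^ 2 * (1 + t ^ 2))) :=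
          div_le_div₀ (by positivity) hbound (by positivity) hD
      _ = 1 / (min 1 (1 + s) * ω ^ 2) := by
          rw [one_mul]
          field_simp
end
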